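/- Let X be a normal integral Noetherian scheme with function field K, and let K' | K be a finite separable field extension such that the normalization Y of X in K' is étale over X. Then for any dominant morphism from the spectrum of a valuation ring O_v of K centered at a point x ∈ X (i.e. O_v dominates O_{X,x}), the valuation v is unramified in K'|K. -/
import Mathlib


universe u
set_option synthInstance.maxHeartbeats 400000

set_option maxHeartbeats 1000000

open Algebra TensorProduct

/-- Membership in a valuation subring from integrality. -/
theorem aux_mem_of_isIntegral {L : Type*} [Field L] (W : ValuationSubring L) {x : L}
    (h : IsIntegral W x) : x ∈ W := by
  have : IsIntegrallyClosed W := inferInstance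
  obtain ⟨y, hy⟩ := IsIntegrallyClosed.isIntegral_iff.mp h
  exact hy ▸ y.2

/-- Two ring homs from an unramified algebra to a local ring which agree on the base and
agree modulo the maximal ideal are equal. -/
theorem aux_unramified_homs_eq {R B S : Type*} [CommRing R] [CommRing B] [CommRing S]
    [Algebra R B] [Algebra.FormallyUnramified R B] [Algebra.EssFiniteType R B]
    [IsLocalRing S]
    (f g : B →+* S) (hfg : f.comp (algebraMap R B) = g.comp (algebraMap R B))
    (h : ∀ b, f b - g b ∈ IsLocalRing.maximalIdeal S) : f = g := by
  letI : Algebra R S := (f.comp (algebraMap R B)).toAlgebra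
  let f' : B →ₐ[R] S := ⟨f, fun r => rfl⟩
  let g' : B →ₐ[R] S := ⟨g, fun r => (congrFun (congrArg DFunLike.coe hfg.symm) r : _)⟩
  let H : B ⊗[R] B →ₐ[R] S := Algebra.TensorProduct.lift f' g' (fun _ _ => Commute.all _ _)
  let e : S := H (Algebra.FormallyUnramified.elem R B)
  have hH1 : ∀ b : B, H ((1 : B) ⊗ₜ[R] b - b ⊗ₜ[R] (1 : B)) = g b - f b := by
    intro b
    simp [H, Algebra.TensorProduct.lift_tmul, f', g']
  have key : ∀ b : B, e * (g b - f b) = 0 := by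
    intro b
    have := congrArg H (Algebra.FormallyUnramified.one_tmul_sub_tmul_one_mul_elem (R := R) b)
    rw [map_mul, map_zero, hH1] at this
    rw [mul_comm]; exact this
  have hmem : (1 : B ⊗[R] B) - Algebra.FormallyUnramified.elem R B ∈
      Ideal.span (Set.range fun b : B => (1 : B) ⊗ₜ[R] b - b ⊗ₜ[R] (1 : B)) := by
    rw [KaehlerDifferential.span_range_eq_ideal]
    simp [KaehlerDifferential.ideal, RingHom.mem_ker,
      Algebra.FormallyUnramified.lmul_elem]
  have hspan : (1 : S) - e ∈ Ideal.span (Set.range fun b : B => g b - f b) := by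
    have := Ideal.mem_map_of_mem (f := H.toRingHom) hmem
    rw [Ideal.map_span] at this
    simp only [map_sub, map_one] at this
    refine Ideal.span_mono ?_ this
    rintro _ ⟨_, ⟨b, rfl⟩, rfl⟩
    exact ⟨b, (hH1 b).symm⟩
  have he0 : (1 - e) * e = 0 := by
    have hle : Ideal.span (Set.range fun b : B => g b - f b) ≤
        (Submodule.span S {e}).annihilator := by
      rw [Ideal.span_le]
      rintro _ ⟨b, rfl⟩
      rw [SetLike.mem_coe, Submodule.mem_annihilator_span_singleton, smul_eq_mul, mul_comm]
      exact key b
    have := hle hspan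
    rwa [Submodule.mem_annihilator_span_singleton, smul_eq_mul] at this
  have hm : (1:S) - e ∈ IsLocalRing.maximalIdeal S := by
    refine Ideal.span_le.mpr ?_ hspan
    rintro _ ⟨b, rfl⟩
    have := neg_mem (h b)
    rwa [neg_sub] at this
  have he1 : e = 1 := by
    rcases IsLocalRing.isUnit_or_isUnit_of_add_one (a := e) (b := 1 - e) (by ring) with hu | hu
    · have := hu.mul_left_cancel (by rw [mul_comm e (1-e), he0, mul_zero] : e * (1 - e) = e * 0)
      have : e = 1 := by linear_combination -this
      exact this
    · exact absurd (Ideal.eq_top_of_isUnit_mem _ hm hu)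
        (IsLocalRing.maximalIdeal.isMaximal S).ne_top
  ext b
  have := key b
  rw [he1, one_mul, sub_eq_zero] at this
  exact this.symm

/-- The elements of `L` fixed by a `K`-algebra automorphism, as an intermediate field. -/
def aux_fixedPts {K L : Type*} [Field K] [Field L] [Algebra K L] (σ : L ≃ₐ[K] L) :
    IntermediateField K L where
  carrier := {x | σ x = x}
  mul_mem' := fun {a b} ha hb => by simp only [Set.mem_setOf_eq] at *; rw [map_mul, ha, hb]
  add_mem' := fun {a b} ha hb => by simp only [Set.mem_setOf_eq] at *; rw [map_add, ha, hb]
  one_mem' := by simp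
  zero_mem' := by simp
  algebraMap_mem' := fun r => by simp
  inv_mem' := fun a ha => by simp only [Set.mem_setOf_eq] at *; rw [map_inv₀, ha]

/-- Section 2, Remark 2.2 / Definition of (un)ramifiedness.
Let `X` be a normal integral Noetherian scheme with function field `K` and let `K'|K` be a
finite separable extension such that the normalization `Y` of `X` in `K'` is étale over
`X`.  Localizing at a point `x ∈ X`, this means: let `R = O_{X,x}` be a normal Noetherian
local domain with fraction field `K` such that the integral closure `B` of `R` in `K'` is
(finite) étale over `R`.  Then every valuation `v` of `K` whose valuation ring dominates
`R` (i.e. is centered at `x`) is unramified in `K'|K`: for every finite Galois extension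
`L|K` containing `K'` and generated by the images of `K'` (the Galois closure), and every
extension `W` of `v` to `L`, the inertia group `T_W(L|K)` is trivial. -/
theorem statement19
    (R : Type u) [CommRing R] [IsDomain R] [IsNoetherianRing R] [IsLocalRing R]
    [IsIntegrallyClosed R]
    (K : Type u) [Field K] [Algebra R K] [IsFractionRing R K]
    (K' : Type u) [Field K'] [Algebra K K'] [FiniteDimensional K K']
    [Algebra.IsSeparable K K']
    [Algebra R K'] [IsScalarTower R K K']
    -- the normalization `B` of `R` in `K'` is finite étale over `R`:
    [Module.Finite R (integralClosure R K')] [Algebra.Etale R ↥(integralClosure R K')]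
    -- `v` a valuation of `K` whose valuation ring `O_v` dominates `R` (center `x ∈ X`):
    (Ov : ValuationSubring K)
    (hcen : ∀ r : R, algebraMap R K r ∈ Ov)
    (hdom : ∀ r : R, ¬ IsUnit r → ¬ IsUnit (⟨algebraMap R K r, hcen r⟩ : Ov))
    -- `L|K` a Galois closure of `K'|K`:
    (L : Type u) [Field L] [Algebra K L] [Algebra K' L] [IsScalarTower K K' L]
    [FiniteDimensional K L] [IsGalois K L]
    (hgen : IntermediateField.adjoin K
      (⋃ g : K' →ₐ[K] L, Set.range g) = (⊤ : IntermediateField K L))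
    -- `W` an extension of `v` to `L`:
    (W : ValuationSubring L)
    (hres : ∀ x : K, algebraMap K L x ∈ W ↔ x ∈ Ov) :
    ValuationSubring.inertiaSubgroup K W = ⊥ := by
  classical
  rw [eq_bot_iff]
  intro σ hσ
  rw [Subgroup.mem_bot]
  -- inertia condition: σ acts trivially mod the maximal ideal of W
  have hsm : ∀ a : W, (σ • a : W) - a ∈ IsLocalRing.maximalIdeal W := by
    intro a
    have h1 : IsLocalRing.residue (W : Type u) (σ • a) = σ • IsLocalRing.residue (W : Type u) a :=
      IsLocalRing.ResidueField.residue_smul (↥(ValuationSubring.decompositionSubgroup K W)) σ a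
    have h2 : σ • IsLocalRing.residue (W : Type u) a = IsLocalRing.residue (W : Type u) a := by
      have := DFunLike.congr_fun hσ (IsLocalRing.residue (W : Type u) a)
      exact this
    rw [h2] at h1
    exact (Ideal.Quotient.eq (I := IsLocalRing.maximalIdeal W)).mp h1
  -- membership of integral images in W
  have hmemW : ∀ (ψ : K' →+* L), (∀ x : K, ψ (algebraMap K K' x) = algebraMap K L x) →
      ∀ b : K', IsIntegral R b → ψ b ∈ W := by
    intro ψ hψ b hb
    obtain ⟨p, pm, hev⟩ := hb
    -- the map R → W
    let ρ : R →+* W := RingHom.codRestrict ((algebraMap K L).comp (algebraMap R K))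
      W.toSubring (fun r => (hres _).mpr (hcen r))
    refine aux_mem_of_isIntegral W (x := ψ b) ⟨p.map ρ, pm.map ρ, ?_⟩
    have hcomp : (algebraMap W L).comp ρ = ψ.comp (algebraMap R K') := by
      ext r
      simp only [RingHom.comp_apply]
      rw [IsScalarTower.algebraMap_apply R K K', hψ]
      rfl
    rw [Polynomial.eval₂_map, hcomp, ← Polynomial.hom_eval₂]
    rw [show Polynomial.eval₂ (algebraMap R K') b p = 0 from hev, map_zero]
  -- σ fixes g(K') for every embedding g
  haveI : IsFractionRing (integralClosure R K') K' :=
    integralClosure.isFractionRing_of_finite_extension K K'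
  have hfix : ∀ (g : K' →ₐ[K] L) (x : K'), σ.val (g x) = g x := by
    intro g
    set B := ↥(integralClosure R K') with hB
    -- the two ring homs B → W
    have hg : ∀ x : K, (g : K' →+* L) (algebraMap K K' x) = algebraMap K L x := fun x =>
      g.commutes x
    have hσg : ∀ x : K, ((σ.val : L →+* L).comp (g : K' →+* L)) (algebraMap K K' x)
        = algebraMap K L x := by
      intro x
      simp only [RingHom.comp_apply, hg]
      exact σ.val.commutes x
    let φ : B →+* K' := algebraMap B K'
    have hintegral : ∀ b : B, IsIntegral R (φ b) := fun b => b.2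
    let F : B →+* W := RingHom.codRestrict ((g : K' →+* L).comp φ) W.toSubring
      (fun b => hmemW _ hg _ (hintegral b))
    let G : B →+* W := RingHom.codRestrict (((σ.val : L →+* L).comp (g : K' →+* L)).comp φ)
      W.toSubring (fun b => hmemW _ hσg _ (hintegral b))
    have hFG : F = G := by
      apply aux_unramified_homs_eq (R := R)
      · ext r
        show (g : K' →+* L) (φ (algebraMap R B r)) = σ.val ((g : K' →+* L) (φ (algebraMap R B r)))
        have : φ (algebraMap R B r) = algebraMap R K' r := rfl
        rw [this, IsScalarTower.algebraMap_apply R K K', hg, (σ.val.commutes _)]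
      · intro b
        have hGb : G b = σ • (F b) := by
          apply Subtype.ext
          rfl
        have := hsm (F b)
        rw [← hGb] at this
        have := neg_mem this
        rwa [neg_sub] at this
    intro x
    obtain ⟨a, b, hb, rfl⟩ := IsFractionRing.div_surjective (A := B) x
    have ha : σ.val (g (algebraMap B K' a)) = g (algebraMap B K' a) := by
      have := congrArg Subtype.val (DFunLike.congr_fun hFG a)
      exact this.symm
    have hbfix : σ.val (g (algebraMap B K' b)) = g (algebraMap B K' b) := by
      have := congrArg Subtype.val (DFunLike.congr_fun hFG b)
      exact this.symm
    rw [map_div₀, map_div₀, ha, hbfix]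
  -- conclude σ = 1 via the generation hypothesis
  apply Subtype.ext
  apply AlgEquiv.ext
  intro x
  have hx : x ∈ aux_fixedPts σ.val := by
    have hle : IntermediateField.adjoin K (⋃ g : K' →ₐ[K] L, Set.range g) ≤ aux_fixedPts σ.val := by
      rw [IntermediateField.adjoin_le_iff]
      rintro _ ⟨s, ⟨g, rfl⟩, ⟨y, rfl⟩⟩
      exact hfix g y
    rw [hgen] at hle
    exact hle (IntermediateField.mem_top)
  exact hx
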